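/- (Dissipativity of concatenated networks, infinitesimal form.) Let P₁, W₁ be n₁-channel open quantum systems and P₂, W₂ be n₂-channel open quantum systems, let V₁, V₂ be bounded self-adjoint operators, and let r₁, r₂ be bounded self-adjoint operators such that 𝒢_{P₁◁W₁}(V₁) ≤ r₁ and 𝒢_{P₂◁W₂}(V₂) ≤ r₂. Then 𝒢_{(P₁⊞P₂)◁(W₁⊞W₂)}(V₁ + V₂) ≤ r₁ + r₂ + 𝒢_{P₁◁W₁}(V₂) + 𝒢_{P₂◁W₂}(V₁). -/

import Mathlib

noncomputable section

open Finset

variable {E : Type*} [NormedAddCommGroup E] [InnerProductSpace ℂ E] [CompleteSpace E]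

/-- `Im{A} = (A - A*)/(2i)`. -/
def imOp (A : E →L[ℂ] E) : E →L[ℂ] E := (2 * Complex.I)⁻¹ • (A - star A)

/-- An open quantum system `(S, L, H)` with field channels indexed by `ι`: an `ι×ι` matrix
`S` of bounded operators, an `ι`-vector `L` of bounded operators, and an operator `H`. -/
structure QOpen (ι : Type*) (E : Type*) [NormedAddCommGroup E] [InnerProductSpace ℂ E]
    [CompleteSpace E] where
  S : Matrix ι ι (E →L[ℂ] E)
  L : ι → E →L[ℂ] E
  H : E →L[ℂ] E

/-- The scattering matrix of `G` is unitary: `S†S = SS† = I`. -/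
def QOpen.unitaryS {ι : Type*} [Fintype ι] [DecidableEq ι] (G : QOpen ι E) : Prop :=
  G.S.conjTranspose * G.S = 1 ∧ G.S * G.S.conjTranspose = 1

/-- The series product `G₂ ◁ G₁ = (S₂S₁, L₂ + S₂L₁, H₁ + H₂ + Im{L₂†S₂L₁})`. -/
def series {ι : Type*} [Fintype ι] (G₂ G₁ : QOpen ι E) : QOpen ι E where
  S := G₂.S * G₁.S
  L := fun j => G₂.L j + ∑ k, G₂.S j k * G₁.L k
  H := G₁.H + G₂.H + imOp (∑ j, ∑ k, star (G₂.L j) * G₂.S j k * G₁.L k)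

open scoped ComplexOrder

/-- Operator ordering: `A ≤ B` iff `⟨ψ, Aψ⟩ ≤ ⟨ψ, Bψ⟩` for all `ψ`. -/
def opLE (A B : E →L[ℂ] E) : Prop :=
  ∀ ψ : E, (inner ℂ ψ (A ψ) : ℂ) ≤ (inner ℂ ψ (B ψ) : ℂ)

/-- The Lindblad superoperator `𝓛_L(X) = (1/2) Σ_j (L_j* [X, L_j] + [L_j*, X] L_j)`. -/
def lindblad {ι : Type*} [Fintype ι] (L : ι → E →L[ℂ] E) (X : E →L[ℂ] E) : E →L[ℂ] E :=
  (2 : ℂ)⁻¹ • ∑ j, (star (L j) * ⁅X, L j⁆ + ⁅star (L j), X⁆ * L j)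

/-- The generator `𝒢_G(X) = −i[X, H] + 𝓛_L(X)` of an open quantum system `G`. -/
def QOpen.gen {ι : Type*} [Fintype ι] (G : QOpen ι E) (X : E →L[ℂ] E) : E →L[ℂ] E :=
  (-Complex.I) • ⁅X, G.H⁆ + lindblad G.L X

/-- The concatenation `G₁ ⊞ G₂ = (diag(S₁, S₂), (L₁; L₂), H₁ + H₂)`. -/
def concat {ι κ : Type*} [Fintype ι] [Fintype κ] (G₁ : QOpen ι E) (G₂ : QOpen κ E) :
    QOpen (ι ⊕ κ) E where
  S := Matrix.fromBlocks G₁.S 0 0 G₂.S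
  L := Sum.elim G₁.L G₂.L
  H := G₁.H + G₂.H

lemma imOp_add (A B : E →L[ℂ] E) : imOp (A + B) = imOp A + imOp B := by
  unfold imOp
  rw [star_add, ← smul_add]
  congr 1
  abel

lemma lindblad_sum_elim {ι κ : Type*} [Fintype ι] [Fintype κ]
    (L₁ : ι → E →L[ℂ] E) (L₂ : κ → E →L[ℂ] E) (X : E →L[ℂ] E) :
    lindblad (Sum.elim L₁ L₂) X = lindblad L₁ X + lindblad L₂ X := by
  unfold lindblad
  rw [Fintype.sum_sum_type, smul_add]
  simp

lemma lindblad_add_X {ι : Type*} [Fintype ι] (L : ι → E →L[ℂ] E) (X Y : E →L[ℂ] E) :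
    lindblad L (X + Y) = lindblad L X + lindblad L Y := by
  unfold lindblad
  rw [← smul_add, ← Finset.sum_add_distrib]
  congr 1
  refine Finset.sum_congr rfl fun j _ => ?_
  simp only [Ring.lie_def, mul_add, add_mul, mul_sub, sub_mul]
  abel

lemma gen_add_X {ι : Type*} [Fintype ι] (G : QOpen ι E) (X Y : E →L[ℂ] E) :
    G.gen (X + Y) = G.gen X + G.gen Y := by
  unfold QOpen.gen
  rw [lindblad_add_X, show ⁅X + Y, G.H⁆ = ⁅X, G.H⁆ + ⁅Y, G.H⁆ from by simp only [Ring.lie_def, add_mul, mul_add]; abel, smul_add]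
  abel

lemma gen_concat_series {ι κ : Type*} [Fintype ι] [DecidableEq ι] [Fintype κ] [DecidableEq κ]
    (P₁ W₁ : QOpen ι E) (P₂ W₂ : QOpen κ E) (X : E →L[ℂ] E) :
    (series (concat P₁ P₂) (concat W₁ W₂)).gen X
      = (series P₁ W₁).gen X + (series P₂ W₂).gen X := by
  have hL : (series (concat P₁ P₂) (concat W₁ W₂)).L
      = Sum.elim (series P₁ W₁).L (series P₂ W₂).L := by
    funext j
    cases j with
    | inl i => simp [series, concat, Fintype.sum_sum_type]
    | inr i => simp [series, concat, Fintype.sum_sum_type]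
  have hH : (series (concat P₁ P₂) (concat W₁ W₂)).H
      = (series P₁ W₁).H + (series P₂ W₂).H := by
    show _ + _ + imOp _ = _
    have hsum : (∑ j : ι ⊕ κ, ∑ k : ι ⊕ κ,
        star ((concat P₁ P₂).L j) * (concat P₁ P₂).S j k * (concat W₁ W₂).L k)
        = (∑ j : ι, ∑ k : ι, star (P₁.L j) * P₁.S j k * W₁.L k)
          + (∑ j : κ, ∑ k : κ, star (P₂.L j) * P₂.S j k * W₂.L k) := by
      rw [Fintype.sum_sum_type]
      simp [concat, Fintype.sum_sum_type]
    rw [hsum, imOp_add]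
    show (W₁.H + W₂.H) + (P₁.H + P₂.H) + _ = (W₁.H + P₁.H + _) + (W₂.H + P₂.H + _)
    abel
  show (-Complex.I) • ⁅X, _⁆ + lindblad _ X = _
  rw [hL, hH, lindblad_sum_elim, show ⁅X, (series P₁ W₁).H + (series P₂ W₂).H⁆ = ⁅X, (series P₁ W₁).H⁆ + ⁅X, (series P₂ W₂).H⁆ from by simp only [Ring.lie_def, add_mul, mul_add]; abel, smul_add]
  show _ = ((-Complex.I) • ⁅X, _⁆ + lindblad _ X) + ((-Complex.I) • ⁅X, _⁆ + lindblad _ X)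
  abel

/-- dissipativity of concatenated networks, infinitesimal form: if
`𝒢_{P₁◁W₁}(V₁) ≤ r₁` and `𝒢_{P₂◁W₂}(V₂) ≤ r₂` for self-adjoint `V₁, V₂, r₁, r₂`, then
`𝒢_{(P₁⊞P₂)◁(W₁⊞W₂)}(V₁ + V₂) ≤ r₁ + r₂ + 𝒢_{P₁◁W₁}(V₂) + 𝒢_{P₂◁W₂}(V₁)`. -/
theorem stmt_19 {ι κ : Type*} [Fintype ι] [DecidableEq ι] [Fintype κ] [DecidableEq κ]
    (P₁ W₁ : QOpen ι E) (P₂ W₂ : QOpen κ E)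
    (hSP₁ : P₁.unitaryS) (hSW₁ : W₁.unitaryS) (hSP₂ : P₂.unitaryS) (hSW₂ : W₂.unitaryS)
    (hHP₁ : IsSelfAdjoint P₁.H) (hHW₁ : IsSelfAdjoint W₁.H)
    (hHP₂ : IsSelfAdjoint P₂.H) (hHW₂ : IsSelfAdjoint W₂.H)
    (V₁ V₂ r₁ r₂ : E →L[ℂ] E)
    (hV₁ : IsSelfAdjoint V₁) (hV₂ : IsSelfAdjoint V₂)
    (hr₁ : IsSelfAdjoint r₁) (hr₂ : IsSelfAdjoint r₂)
    (h₁ : opLE ((series P₁ W₁).gen V₁) r₁)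
    (h₂ : opLE ((series P₂ W₂).gen V₂) r₂) :
    opLE ((series (concat P₁ P₂) (concat W₁ W₂)).gen (V₁ + V₂))
      (r₁ + r₂ + (series P₁ W₁).gen V₂ + (series P₂ W₂).gen V₁) := by
  intro ψ
  rw [gen_add_X, gen_concat_series, gen_concat_series]
  have key : ((series P₁ W₁).gen V₁ + (series P₂ W₂).gen V₁
      + ((series P₁ W₁).gen V₂ + (series P₂ W₂).gen V₂))
      = ((series P₁ W₁).gen V₁ + (series P₂ W₂).gen V₂)
        + ((series P₁ W₁).gen V₂ + (series P₂ W₂).gen V₁) := by abel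
  rw [key]
  simp only [ContinuousLinearMap.add_apply, inner_add_right]
  have h1 := h₁ ψ
  have h2 := h₂ ψ
  have := add_le_add (add_le_add h1 h2)
    (le_refl ((inner ℂ ψ ((series P₁ W₁).gen V₂ ψ) : ℂ)
      + (inner ℂ ψ ((series P₂ W₂).gen V₁ ψ) : ℂ)))
  calc _ ≤ _ := this
    _ = _ := by ring
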